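/- For every n ∈ ℕ, the identity ∑_{k=0}^{⌊n/2⌋} C_k · binom(n, 2k) · z^k (1+z)^{n-2k} = ∑_{k=0}^n (1/(n+1)) binom(n+1, k) binom(n+1, k+1) z^k holds as polynomials in z, where C_k is the k-th Catalan number. -/

import Mathlib

open Polynomial Finset

private lemma term_eq (n m k : ℕ) (hm : m ≤ n) (hk : k ≤ m) :
    ((m : ℚ) + 1) * ((catalan k : ℚ) * (Nat.choose n (2 * k) : ℚ) *
        (Nat.choose (n - 2 * k) (m - k) : ℚ)) =
      (Nat.choose n m : ℚ) * ((Nat.choose (n - m) k : ℚ) * (Nat.choose (m + 1) (k + 1) : ℚ)) := by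
  rcases le_or_gt (m + k) n with h | h
  · have h1 : (Nat.choose n (m + k) : ℚ) * (Nat.choose (m + k) (2 * k) : ℚ) =
        (Nat.choose n (2 * k) : ℚ) * (Nat.choose (n - 2 * k) (m - k) : ℚ) := by
      have := Nat.choose_mul (n := n) (k := m + k) (s := 2 * k) (by omega)
      rw [show m + k - 2 * k = m - k by omega] at this
      exact_mod_cast this
    have h2 : (Nat.choose (m + k) (2 * k) : ℚ) * (Nat.choose (2 * k) k : ℚ) =
        (Nat.choose (m + k) k : ℚ) * (Nat.choose m k : ℚ) := by
      have := Nat.choose_mul (n := m + k) (k := 2 * k) (s := k) (by omega)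
      rw [show m + k - k = m by omega, show 2 * k - k = k by omega] at this
      exact_mod_cast this
    have h3 : ((k : ℚ) + 1) * (catalan k : ℚ) = (Nat.choose (2 * k) k : ℚ) := by
      have := succ_mul_catalan_eq_centralBinom k
      rw [Nat.centralBinom] at this
      exact_mod_cast this
    have h4 : ((m : ℚ) + 1) * (Nat.choose m k : ℚ) =
        (Nat.choose (m + 1) (k + 1) : ℚ) * ((k : ℚ) + 1) := by
      have := Nat.add_one_mul_choose_eq m k
      exact_mod_cast this
    have h5 : (Nat.choose (m + k) k : ℚ) = (Nat.choose (m + k) m : ℚ) := by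
      have : Nat.choose (k + m) k = Nat.choose (k + m) m := Nat.choose_symm_add
      rw [Nat.add_comm k m] at this
      exact_mod_cast this
    have h6 : (Nat.choose n (m + k) : ℚ) * (Nat.choose (m + k) m : ℚ) =
        (Nat.choose n m : ℚ) * (Nat.choose (n - m) k : ℚ) := by
      have := Nat.choose_mul (n := n) (k := m + k) (s := m) (by omega)
      rw [show m + k - m = k by omega] at this
      exact_mod_cast this
    have hk1 : ((k : ℚ) + 1) ≠ 0 := by positivity
    apply mul_left_cancel₀ hk1
    linear_combination (-((k:ℚ)+1)*((m:ℚ)+1)*(catalan k : ℚ)) * h1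
      + ((m:ℚ)+1)*(Nat.choose n (m+k) : ℚ)*(Nat.choose (m+k) (2*k) : ℚ) * h3
      + ((m:ℚ)+1)*(Nat.choose n (m+k) : ℚ) * h2
      + ((m:ℚ)+1)*(Nat.choose n (m+k) : ℚ)*(Nat.choose m k : ℚ) * h5
      + ((m:ℚ)+1)*(Nat.choose m k : ℚ) * h6
      + (Nat.choose n m : ℚ)*(Nat.choose (n-m) k : ℚ) * h4
  · have hr : Nat.choose (n - m) k = 0 := Nat.choose_eq_zero_of_lt (by omega)
    rcases le_or_gt (2 * k) n with h2 | h2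
    · have hl : Nat.choose (n - 2 * k) (m - k) = 0 := Nat.choose_eq_zero_of_lt (by omega)
      rw [hl, hr]; push_cast; ring
    · have hl : Nat.choose n (2 * k) = 0 := Nat.choose_eq_zero_of_lt (by omega)
      rw [hl, hr]; push_cast; ring

private lemma keyQ (n m : ℕ) (hm : m ≤ n) :
    ((m : ℚ) + 1) * ∑ k ∈ Finset.range (m + 1),
        ((catalan k : ℚ) * (Nat.choose n (2 * k) : ℚ) * (Nat.choose (n - 2 * k) (m - k) : ℚ)) =
      (Nat.choose n m : ℚ) * (Nat.choose (n + 1) m : ℚ) := by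
  rw [Finset.mul_sum]
  have : ∀ k ∈ Finset.range (m + 1),
      ((m : ℚ) + 1) * ((catalan k : ℚ) * (Nat.choose n (2 * k) : ℚ) *
          (Nat.choose (n - 2 * k) (m - k) : ℚ)) =
        (Nat.choose n m : ℚ) * ((Nat.choose (n - m) k : ℚ) * (Nat.choose (m + 1) (k + 1) : ℚ)) := by
    intro k hk
    exact term_eq n m k hm (by simpa using Nat.lt_succ_iff.mp (Finset.mem_range.mp hk))
  rw [Finset.sum_congr rfl this, ← Finset.mul_sum]
  congr 1
  have hv := Nat.add_choose_eq (n - m) (m + 1) m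
  rw [show n - m + (m + 1) = n + 1 by omega] at hv
  rw [Finset.Nat.sum_antidiagonal_eq_sum_range_succ_mk] at hv
  rw [hv]
  push_cast
  apply Finset.sum_congr rfl
  intro k hk
  have hk' : k ≤ m := Nat.lt_succ_iff.mp (Finset.mem_range.mp hk)
  have : Nat.choose (m + 1) (m - k) = Nat.choose (m + 1) (k + 1) :=
    Nat.choose_symm_of_eq_add (by omega)
  rw [this]

theorem stmt6 (n : ℕ) :
    (∑ k ∈ Finset.range (n / 2 + 1),
        Polynomial.C ((catalan k : ℚ) * (Nat.choose n (2 * k) : ℚ)) *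
          Polynomial.X ^ k * (1 + Polynomial.X) ^ (n - 2 * k)) =
      ∑ k ∈ Finset.range (n + 1),
        Polynomial.C ((1 / (n + 1) : ℚ) *
            (Nat.choose (n + 1) k : ℚ) * (Nat.choose (n + 1) (k + 1) : ℚ)) *
          Polynomial.X ^ k := by
  refine Polynomial.ext fun m => ?_
  rw [Polynomial.finset_sum_coeff, Polynomial.finset_sum_coeff]
  have hL : ∀ k ∈ Finset.range (n / 2 + 1),
      (Polynomial.C ((catalan k : ℚ) * (Nat.choose n (2 * k) : ℚ)) *
          Polynomial.X ^ k * (1 + Polynomial.X) ^ (n - 2 * k)).coeff m =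
        (if k ≤ m then (catalan k : ℚ) * (Nat.choose n (2 * k) : ℚ) *
          (Nat.choose (n - 2 * k) (m - k) : ℚ) else 0) := by
    intro k _
    rw [mul_right_comm, Polynomial.coeff_mul_X_pow', Polynomial.coeff_C_mul,
      Polynomial.coeff_one_add_X_pow]
  rw [Finset.sum_congr rfl hL]
  have hR : ∀ k ∈ Finset.range (n + 1),
      (Polynomial.C ((1 / (n + 1) : ℚ) *
          (Nat.choose (n + 1) k : ℚ) * (Nat.choose (n + 1) (k + 1) : ℚ)) *
        Polynomial.X ^ k).coeff m =
        (if m = k then (1 / (n + 1) : ℚ) *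
          (Nat.choose (n + 1) k : ℚ) * (Nat.choose (n + 1) (k + 1) : ℚ) else 0) := by
    intro k _
    rw [Polynomial.coeff_C_mul, Polynomial.coeff_X_pow]
    split_ifs <;> ring
  rw [Finset.sum_congr rfl hR, Finset.sum_ite_eq]
  rcases le_or_gt m n with hm | hm
  · rw [if_pos (Finset.mem_range.mpr (by omega))]
    set g : ℕ → ℚ := fun k => if k ≤ m then (catalan k : ℚ) * (Nat.choose n (2 * k) : ℚ) *
      (Nat.choose (n - 2 * k) (m - k) : ℚ) else 0 with hg
    have e1 : ∑ k ∈ Finset.range (n / 2 + 1), g k = ∑ k ∈ Finset.range (n + 1), g k := by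
      apply Finset.sum_subset (Finset.range_subset_range.mpr (by omega))
      intro k hk hk'
      have h2k : n < 2 * k := by
        have := Finset.mem_range.not.mp hk'
        omega
      have : Nat.choose n (2 * k) = 0 := Nat.choose_eq_zero_of_lt h2k
      simp [hg, this]
    have e2 : ∑ k ∈ Finset.range (m + 1),
        ((catalan k : ℚ) * (Nat.choose n (2 * k) : ℚ) * (Nat.choose (n - 2 * k) (m - k) : ℚ)) =
        ∑ k ∈ Finset.range (n + 1), g k := by
      rw [← Finset.sum_subset (Finset.range_subset_range.mpr (show m + 1 ≤ n + 1 by omega))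
        (fun k _ hk' => by
          have : ¬ k ≤ m := by
            have := Finset.mem_range.not.mp hk'
            omega
          simp [hg, this])]
      apply Finset.sum_congr rfl
      intro k hk
      have : k ≤ m := by have := Finset.mem_range.mp hk; omega
      simp [hg, this]
    have hkey := keyQ n m hm
    have hmc : ((m : ℚ) + 1) ≠ 0 := by positivity
    have hnc : ((n : ℚ) + 1) ≠ 0 := by positivity
    have hrel : ((n : ℚ) + 1) * (Nat.choose n m : ℚ) =
        (Nat.choose (n + 1) (m + 1) : ℚ) * ((m : ℚ) + 1) := by
      exact_mod_cast Nat.add_one_mul_choose_eq n m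
    rw [e1, ← e2]
    apply mul_left_cancel₀ hmc
    rw [hkey]
    field_simp
    linear_combination (Nat.choose (n+1) m : ℚ) * hrel
  · rw [if_neg (by simp; omega)]
    apply Finset.sum_eq_zero
    intro k hk
    have hk' : 2 * k ≤ n := by
      have := Finset.mem_range.mp hk
      omega
    have : Nat.choose (n - 2 * k) (m - k) = 0 := Nat.choose_eq_zero_of_lt (by omega)
    simp [this]
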